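/- Let c, c', ε, Q be real numbers with 1 < c < c' < 2, 0 < ε < 1, and Q > 1, and let ξ be an irrational real number with 0 < ξ < 1. Then at least one of the following holds: (i) there exist coprime integers u ≥ 1 and v ∈ {0, …, u} such that u < (2c²/((c−1)(c'−c))) · (1/ε) and |ξ − v/u| ≤ (2/(c−1)) · (1 + c²/(c'−c)) · 1/(uQ); or (ii) there exist integers p and q such that Q ≤ q ≤ cQ and ε/q ≤ ξ − p/q ≤ c'ε/q. -/

import Mathlib

set_option maxHeartbeats 1000000

theorem farey_dichotomy (c c' ε Q : ℝ)
    (hc : 1 < c) (hcc' : c < c') (hc' : c' < 2) (hε0 : 0 < ε) (hε1 : ε < 1) (hQ : 1 < Q)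
    (ξ : ℝ) (hξ : Irrational ξ) (hξ0 : 0 < ξ) (hξ1 : ξ < 1) :
    (∃ u v : ℤ, 1 ≤ u ∧ 0 ≤ v ∧ v ≤ u ∧ IsCoprime u v ∧
      (u : ℝ) < 2 * c ^ 2 / ((c - 1) * (c' - c)) * (1 / ε) ∧
      |ξ - (v : ℝ) / (u : ℝ)| ≤ 2 / (c - 1) * (1 + c ^ 2 / (c' - c)) * (1 / ((u : ℝ) * Q))) ∨
    (∃ p q : ℤ, Q ≤ (q : ℝ) ∧ (q : ℝ) ≤ c * Q ∧
      ε / (q : ℝ) ≤ ξ - (p : ℝ) / (q : ℝ) ∧ ξ - (p : ℝ) / (q : ℝ) ≤ c' * ε / (q : ℝ)) := by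
  have hc0 : (0:ℝ) < c - 1 := by linarith
  have hc'c : (0:ℝ) < c' - c := by linarith
  have hQ0 : (0:ℝ) < Q := by linarith
  have h1X : (1:ℝ) ≤ 1 + c ^ 2 / (c' - c) := by
    have : (0:ℝ) ≤ c ^ 2 / (c' - c) := by positivity
    linarith
  by_cases hdeg : (c - 1) * Q < 1
  · -- degenerate case: u = 1, v = 0
    left
    refine ⟨1, 0, le_refl 1, le_refl 0, by norm_num, isCoprime_one_left, ?_, ?_⟩
    · push_cast
      have h2 : (2:ℝ) ≤ 2 * c ^ 2 / ((c - 1) * (c' - c)) := by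
        rw [le_div_iff₀ (by positivity)]
        nlinarith
      have hε' : (1:ℝ) ≤ 1 / ε := by
        rw [le_div_iff₀ hε0]; linarith
      calc (1:ℝ) < 2 := one_lt_two
        _ ≤ 2 * c ^ 2 / ((c - 1) * (c' - c)) := h2
        _ ≤ 2 * c ^ 2 / ((c - 1) * (c' - c)) * (1 / ε) :=
            le_mul_of_one_le_right (by linarith) hε'
    · push_cast
      rw [zero_div, sub_zero, abs_of_pos hξ0, one_mul]
      have hiQ : c - 1 < 1 / Q := by rw [lt_div_iff₀ hQ0]; linarith
      have h2 : (2:ℝ) / (c - 1) * (c - 1) ≤ 2 / (c - 1) * (1 / Q) := by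
        have : (0:ℝ) < 2 / (c - 1) := by positivity
        nlinarith
      have h3 : 2 / (c - 1) * (1 / Q) ≤ 2 / (c - 1) * (1 + c ^ 2 / (c' - c)) * (1 / Q) := by
        have h1Q : (0:ℝ) ≤ 1 / Q := by positivity
        have hp : (0:ℝ) ≤ 2 / (c - 1) := by positivity
        exact mul_le_mul_of_nonneg_right (le_mul_of_one_le_right hp h1X) h1Q
      have h4 : (2:ℝ) / (c - 1) * (c - 1) = 2 := by field_simp
      linarith
  push_neg at hdeg
  -- main case: 1 ≤ (c-1)*Q
  set N : ℕ := ⌊(c - 1) * Q⌋.toNat with hNdef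
  have hfl1 : (1:ℤ) ≤ ⌊(c - 1) * Q⌋ := by
    rw [Int.le_floor]; exact_mod_cast hdeg
  have hNZ : (N : ℤ) = ⌊(c - 1) * Q⌋ := Int.toNat_of_nonneg (by linarith)
  have hNpos : 0 < N := by omega
  have hNle : (N : ℝ) ≤ (c - 1) * Q := by
    have := Int.floor_le ((c - 1) * Q)
    rw [← hNZ] at this; exact_mod_cast this
  have hNlt : (c - 1) * Q < (N : ℝ) + 1 := by
    have := Int.lt_floor_add_one ((c - 1) * Q)
    rw [← hNZ] at this; exact_mod_cast this
  obtain ⟨j, k, hk0, hkN, hjk⟩ := Real.exists_int_int_abs_mul_sub_le ξ hNpos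
  -- reduce to coprime
  set g : ℕ := Int.gcd k j with hgdef
  have hg0 : 0 < g := Int.gcd_pos_of_ne_zero_left j (by omega)
  obtain ⟨u, hu⟩ : (g:ℤ) ∣ k := Int.gcd_dvd_left k j
  obtain ⟨v, hv⟩ : (g:ℤ) ∣ j := Int.gcd_dvd_right k j
  have hu0 : 0 < u := by
    rcases lt_trichotomy u 0 with h | h | h
    · nlinarith [hu ▸ hk0]
    · simp [h] at hu; omega
    · exact h
  have hcop : IsCoprime u v := by
    rw [Int.isCoprime_iff_gcd_eq_one]
    have h1 : u = k / g := by rw [hu]; exact (Int.mul_ediv_cancel_left _ (by exact_mod_cast hg0.ne')).symm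
    have h2 : v = j / g := by rw [hv]; exact (Int.mul_ediv_cancel_left _ (by exact_mod_cast hg0.ne')).symm
    rw [h1, h2]
    exact Int.gcd_div_gcd_div_gcd hg0
  have hg1 : (1:ℝ) ≤ (g:ℝ) := by exact_mod_cast hg0
  have huk : (u:ℝ) ≤ (k:ℝ) := by
    have : (1:ℤ) ≤ g := by exact_mod_cast hg0
    have : u ≤ k := by nlinarith [hu]
    exact_mod_cast this
  have hukR : (u:ℝ) ≤ (c - 1) * Q := by
    have hkr : (k:ℝ) ≤ (N:ℝ) := by exact_mod_cast hkN
    linarith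
  set δ : ℝ := (u:ℝ) * ξ - (v:ℝ) with hδdef
  have hδbound : |δ| < 1 / ((c - 1) * Q) := by
    have hfac : (k:ℝ) * ξ - (j:ℝ) = (g:ℝ) * δ := by
      rw [hδdef]
      have hu' : (k:ℝ) = (g:ℝ) * (u:ℝ) := by exact_mod_cast hu
      have hv' : (j:ℝ) = (g:ℝ) * (v:ℝ) := by exact_mod_cast hv
      rw [hu', hv']; ring
    have h1 : |δ| ≤ |(k:ℝ) * ξ - (j:ℝ)| := by
      rw [hfac, abs_mul, abs_of_pos (by linarith : (0:ℝ) < (g:ℝ))]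
      nlinarith [abs_nonneg δ]
    have h2 : (1:ℝ) / ((N:ℝ) + 1) < 1 / ((c - 1) * Q) := by
      apply div_lt_div_of_pos_left one_pos (by positivity) hNlt
    calc |δ| ≤ 1 / ((N:ℝ) + 1) := le_trans h1 hjk
      _ < 1 / ((c - 1) * Q) := h2
  have huR0 : (0:ℝ) < (u:ℝ) := by exact_mod_cast hu0
  have hξu : ξ = ((v:ℝ) + δ) / (u:ℝ) := by
    rw [hδdef]; field_simp; ring
  by_cases hucase : (u : ℝ) < 2 * c ^ 2 / ((c - 1) * (c' - c)) * (1 / ε)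
  · -- branch (i)
    left
    have hδ1 : |δ| < 1 := by
      have : (1:ℝ) / ((c - 1) * Q) ≤ 1 := by
        rw [div_le_one (by positivity)]; exact hdeg
      linarith
    rw [abs_lt] at hδ1
    have hprod : (0:ℝ) < (u:ℝ) * ξ := mul_pos huR0 hξ0
    have hprod2 : (u:ℝ) * ξ < (u:ℝ) := mul_lt_of_lt_one_right huR0 hξ1
    have hveq : (v:ℝ) = (u:ℝ) * ξ - δ := by rw [hδdef]; ring
    have hv0 : 0 ≤ v := by
      have : (-1:ℝ) < (v:ℝ) := by rw [hveq]; linarith [hδ1.2]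
      have : (-1:ℤ) < v := by exact_mod_cast this
      omega
    have hvu : v ≤ u := by
      have : (v:ℝ) < (u:ℝ) + 1 := by rw [hveq]; linarith [hδ1.1]
      have : v < u + 1 := by exact_mod_cast this
      omega
    refine ⟨u, v, hu0, hv0, hvu, hcop, hucase, ?_⟩
    have heq : ξ - (v:ℝ) / (u:ℝ) = δ / (u:ℝ) := by
      rw [hδdef]; field_simp
    rw [heq, abs_div, abs_of_pos huR0]
    rw [div_le_iff₀ huR0]
    have hR : 2 / (c - 1) * (1 + c ^ 2 / (c' - c)) * (1 / ((u:ℝ) * Q)) * (u:ℝ)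
        = 2 / (c - 1) * (1 + c ^ 2 / (c' - c)) * (1 / Q) := by
      field_simp
    rw [hR]
    have h1 : |δ| ≤ 1 / ((c - 1) * Q) := le_of_lt hδbound
    have h2 : (1:ℝ) / ((c - 1) * Q) ≤ 2 / (c - 1) * (1 / Q) := by
      rw [div_mul_div_comm, mul_one]
      gcongr
      norm_num
    have h3 : 2 / (c - 1) * (1 / Q) ≤ 2 / (c - 1) * (1 + c ^ 2 / (c' - c)) * (1 / Q) := by
      have hp : (0:ℝ) < 2 / (c - 1) * (1 / Q) := by positivity
      nlinarith
    linarith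
  · -- branch (ii)
    right
    push_neg at hucase
    set E : ℝ := c * Q * |δ| with hEdef
    have hE0 : 0 ≤ E := by positivity
    have hEb : E < c / (c - 1) := by
      rw [hEdef]
      have : c * Q * |δ| < c * Q * (1 / ((c - 1) * Q)) := by
        apply mul_lt_mul_of_pos_left hδbound (by positivity)
      have heq : c * Q * (1 / ((c - 1) * Q)) = c / (c - 1) := by field_simp
      linarith [heq ▸ this]
    have hkey : 1 < (u:ℝ) * (c' - 1) * ε - 2 * E := by
      have h1 : 2 * c ^ 2 / ((c - 1) * (c' - c)) * (1 / ε) * ((c' - 1) * ε)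
          = 2 * c ^ 2 * (c' - 1) / ((c - 1) * (c' - c)) := by
        field_simp
      have h2 : (u:ℝ) * (c' - 1) * ε ≥ 2 * c ^ 2 * (c' - 1) / ((c - 1) * (c' - c)) := by
        rw [← h1]
        have hpos : (0:ℝ) < (c' - 1) * ε := mul_pos (by linarith) hε0
        nlinarith [mul_le_mul_of_nonneg_right hucase hpos.le]
      have h3 : 2 * c ^ 2 * (c' - 1) / ((c - 1) * (c' - c)) > 1 + 2 * (c / (c - 1)) := by
        rw [gt_iff_lt, ← sub_pos]
        have heq : 2 * c ^ 2 * (c' - 1) / ((c - 1) * (c' - c)) - (1 + 2 * (c / (c - 1)))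
            = (2 * c ^ 2 * (c' - 1) - (c' - c) * (3 * c - 1)) / ((c - 1) * (c' - c)) := by
          field_simp; ring
        rw [heq]
        apply div_pos _ (by positivity)
        nlinarith [mul_pos (mul_pos hc0 hc'c) (sub_pos.2 hc'), mul_pos hc0 hc'c]
      linarith
    set m₀ : ℤ := ⌈(u:ℝ) * ε + E⌉ with hm₀def
    have hm₀l : (u:ℝ) * ε + E ≤ (m₀:ℝ) := Int.le_ceil _
    have hm₀u : (m₀:ℝ) ≤ (u:ℝ) * c' * ε - E := by
      have h1 : (m₀:ℝ) < (u:ℝ) * ε + E + 1 := Int.ceil_lt_add_one _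
      nlinarith
    set A : ℤ := ⌊c * Q⌋ with hAdef
    obtain ⟨a, b, hab⟩ := hcop
    set q₀ : ℤ := m₀ * b with hq₀def
    set q : ℤ := A - (A - q₀) % u with hqdef
    have huZ0 : (0:ℤ) < u := hu0
    have hqA : q ≤ A := by
      have := Int.emod_nonneg (A - q₀) (by omega : u ≠ 0)
      omega
    have hqAu : A - u < q := by
      have := Int.emod_lt_of_pos (A - q₀) huZ0
      omega
    have hdvd1 : u ∣ q - q₀ := by
      have h := Int.mul_ediv_add_emod (A - q₀) u
      have : q - q₀ = u * ((A - q₀) / u) := by omega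
      exact ⟨_, this⟩
    have hdvd2 : u ∣ q₀ * v - m₀ := by
      have : q₀ * v - m₀ = u * (-(m₀ * a)) := by
        rw [hq₀def]; linear_combination m₀ * hab
      exact ⟨_, this⟩
    have hdvd : u ∣ q * v - m₀ := by
      have : q * v - m₀ = (q - q₀) * v + (q₀ * v - m₀) := by ring
      rw [this]
      exact dvd_add (Dvd.dvd.mul_right hdvd1 v) hdvd2
    obtain ⟨t, ht⟩ := hdvd
    -- real bounds on q
    have hAle : (A:ℝ) ≤ c * Q := Int.floor_le _
    have hAgt : c * Q < (A:ℝ) + 1 := Int.lt_floor_add_one _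
    have hqle : (q:ℝ) ≤ c * Q := by
      have : (q:ℝ) ≤ (A:ℝ) := by exact_mod_cast hqA
      linarith
    have hqge : Q ≤ (q:ℝ) := by
      have h1 : A - u + 1 ≤ q := by omega
      have h2 : ((A:ℝ) - (u:ℝ) + 1 : ℝ) ≤ (q:ℝ) := by exact_mod_cast h1
      linarith
    have hqR0 : (0:ℝ) < (q:ℝ) := by linarith
    -- key computation
    have hqvR : (q:ℝ) * (v:ℝ) - (m₀:ℝ) = (u:ℝ) * (t:ℝ) := by exact_mod_cast ht
    have hval : (q:ℝ) * ξ - (t:ℝ) = ((m₀:ℝ) + (q:ℝ) * δ) / (u:ℝ) := by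
      have hm : (m₀:ℝ) = (q:ℝ) * (v:ℝ) - (u:ℝ) * (t:ℝ) := by linarith
      rw [hξu, hm]
      field_simp
      ring
    have hqδ : |(q:ℝ) * δ| ≤ E := by
      rw [abs_mul, abs_of_pos hqR0, hEdef]
      have : (0:ℝ) ≤ |δ| := abs_nonneg δ
      nlinarith
    rw [abs_le] at hqδ
    have hlow : ε ≤ (q:ℝ) * ξ - (t:ℝ) := by
      rw [hval, le_div_iff₀ huR0]
      nlinarith
    have hhigh : (q:ℝ) * ξ - (t:ℝ) ≤ c' * ε := by
      rw [hval, div_le_iff₀ huR0]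
      nlinarith
    refine ⟨t, q, hqge, hqle, ?_, ?_⟩
    · -- ε/q ≤ ξ - t/q
      have heq2 : ξ - (t:ℝ) / (q:ℝ) = ((q:ℝ) * ξ - (t:ℝ)) / (q:ℝ) := by
        field_simp
      rw [heq2, div_le_div_iff₀ hqR0 hqR0]
      exact mul_le_mul_of_nonneg_right hlow hqR0.le
    · have heq2 : ξ - (t:ℝ) / (q:ℝ) = ((q:ℝ) * ξ - (t:ℝ)) / (q:ℝ) := by
        field_simp
      rw [heq2, div_le_div_iff₀ hqR0 hqR0]
      exact mul_le_mul_of_nonneg_right hhigh hqR0.le
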